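/- Let Λ be a finite set, α : Λ → ℝ a field, λ ∈ ℝ, and let P be the grand canonical measure with chemical potential λ on {0,1}^Λ. Set ζ_x = η_x e^{−α_x} and ζ̄_Λ = Av_{x∈Λ} ζ_x. Then for every integer 1 ≤ M ≤ |Λ|, P(Σ_{x∈Λ} η_x = M − 1) / P(Σ_{x∈Λ} η_x = M) = (|Λ|/(|Λ| − M + 1)) · e^{−λ} · E[ ζ̄_Λ | Σ_{x∈Λ} η_x = M ]. -/

import Mathlib

noncomputable section

/-- `η_x` as a real number, for a configuration given by its set of occupied sites. -/
def ind {ι : Type*} [DecidableEq ι] (S : Finset ι) (x : ι) : ℝ := if x ∈ S then 1 else 0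

/-- `P(η_x = 1)` for the grand canonical (product) measure with chemical potential `λ`. -/
def pGC {ι : Type*} (α : ι → ℝ) (lam : ℝ) (x : ι) : ℝ :=
  Real.exp (α x + lam) / (1 + Real.exp (α x + lam))

/-- The probability of a configuration under the grand canonical product measure. -/
def wGC {ι : Type*} [Fintype ι] [DecidableEq ι] (α : ι → ℝ) (lam : ℝ) (S : Finset ι) : ℝ :=
  (∏ x ∈ S, pGC α lam x) * ∏ x ∈ Finset.univ \ S, (1 - pGC α lam x)

/-- `P(∑_{x} η_x = M)`. -/
def PM {ι : Type*} [Fintype ι] [DecidableEq ι] (α : ι → ℝ) (lam : ℝ) (M : ℕ) : ℝ :=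
  ∑ S ∈ Finset.univ.powersetCard M, wGC α lam S

/-- `ζ̄_Λ = Av_{x ∈ Λ} η_x e^{-α_x}`. -/
def zetaBar {ι : Type*} [Fintype ι] [DecidableEq ι] (α : ι → ℝ) (S : Finset ι) : ℝ :=
  (Fintype.card ι : ℝ)⁻¹ * ∑ x : ι, ind S x * Real.exp (-α x)

lemma pGC_eq {ι : Type*} (α : ι → ℝ) (lam : ℝ) (x : ι) :
    pGC α lam x = Real.exp (α x + lam) * (1 - pGC α lam x) := by
  have h : (0:ℝ) < 1 + Real.exp (α x + lam) := by positivity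
  unfold pGC
  field_simp
  ring

lemma wGC_erase {ι : Type*} [Fintype ι] [DecidableEq ι] (α : ι → ℝ) (lam : ℝ)
    {S : Finset ι} {x : ι} (hx : x ∈ S) :
    wGC α lam S = wGC α lam (S.erase x) * Real.exp (α x + lam) := by
  unfold wGC
  have h1 : ∏ y ∈ S, pGC α lam y = pGC α lam x * ∏ y ∈ S.erase x, pGC α lam y :=
    (Finset.mul_prod_erase S _ hx).symm
  have h2 : Finset.univ \ S.erase x = insert x (Finset.univ \ S) := by
    ext y
    simp only [Finset.mem_sdiff, Finset.mem_univ, Finset.mem_erase, Finset.mem_insert,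
      true_and]
    by_cases hy : y = x <;> simp [hy] <;> tauto
  have hxnot : x ∉ Finset.univ \ S := by simp [hx]
  rw [h1, h2, Finset.prod_insert hxnot]
  have hp := pGC_eq α lam x
  linear_combination (∏ y ∈ S.erase x, pGC α lam y) *
    (∏ y ∈ Finset.univ \ S, (1 - pGC α lam y)) * hp

lemma zetaBar_eq {ι : Type*} [Fintype ι] [DecidableEq ι] (α : ι → ℝ) (S : Finset ι) :
    zetaBar α S = (Fintype.card ι : ℝ)⁻¹ * ∑ x ∈ S, Real.exp (-α x) := by
  unfold zetaBar ind
  congr 1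
  simp [ite_mul, Finset.sum_ite_mem]

lemma key {ι : Type} [Fintype ι] [DecidableEq ι] (α : ι → ℝ) (lam : ℝ)
    (M : ℕ) (hM : 1 ≤ M) (hMcard : M ≤ Fintype.card ι) :
    ∑ S ∈ Finset.univ.powersetCard M, wGC α lam S * zetaBar α S
      = (Fintype.card ι : ℝ)⁻¹ * Real.exp lam * ((Fintype.card ι : ℝ) - M + 1) *
        PM α lam (M - 1) := by
  set N := Fintype.card ι
  have step1 : ∀ S ∈ (Finset.univ : Finset ι).powersetCard M,
      wGC α lam S * zetaBar α S
        = (N : ℝ)⁻¹ * Real.exp lam * ∑ x ∈ S, wGC α lam (S.erase x) := by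
    intro S _
    have hsum : ∑ x ∈ S, Real.exp (-α x) * wGC α lam S
        = Real.exp lam * ∑ x ∈ S, wGC α lam (S.erase x) := by
      rw [Finset.mul_sum]
      refine Finset.sum_congr rfl fun x hx => ?_
      have he : Real.exp (α x + lam) * Real.exp (-α x) = Real.exp lam := by
        rw [← Real.exp_add]; ring_nf
      rw [wGC_erase α lam hx]
      linear_combination wGC α lam (S.erase x) * he
    have h1 : wGC α lam S * zetaBar α S
        = (N : ℝ)⁻¹ * ∑ x ∈ S, Real.exp (-α x) * wGC α lam S := by
      rw [zetaBar_eq, ← Finset.sum_mul]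
      ring
    rw [h1, hsum]
    ring
  rw [Finset.sum_congr rfl step1, ← Finset.mul_sum]
  have reidx : ∑ S ∈ (Finset.univ : Finset ι).powersetCard M, ∑ x ∈ S, wGC α lam (S.erase x)
      = ∑ T ∈ (Finset.univ : Finset ι).powersetCard (M-1), ∑ x ∈ Finset.univ \ T,
          wGC α lam T := by
    rw [Finset.sum_sigma', Finset.sum_sigma']
    refine Finset.sum_nbij' (fun p => ⟨p.1.erase p.2, p.2⟩) (fun p => ⟨insert p.2 p.1, p.2⟩)
      ?_ ?_ ?_ ?_ ?_
    · rintro ⟨S, x⟩ hp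
      simp only [Finset.mem_sigma, Finset.mem_powersetCard_univ] at hp ⊢
      refine ⟨?_, ?_⟩
      · rw [Finset.card_erase_of_mem hp.2, hp.1]
      · simp [hp.2]
    · rintro ⟨T, x⟩ hp
      simp only [Finset.mem_sigma, Finset.mem_powersetCard_univ, Finset.mem_sdiff] at hp ⊢
      refine ⟨?_, Finset.mem_insert_self _ _⟩
      rw [Finset.card_insert_of_notMem hp.2.2, hp.1]
      omega
    · rintro ⟨S, x⟩ hp
      simp only [Finset.mem_sigma, Finset.mem_powersetCard_univ] at hp
      simp [Finset.insert_erase hp.2]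
    · rintro ⟨T, x⟩ hp
      simp only [Finset.mem_sigma, Finset.mem_powersetCard_univ, Finset.mem_sdiff] at hp
      simp [Finset.erase_insert hp.2.2]
    · rintro ⟨S, x⟩ _
      rfl
  rw [reidx]
  have hcount : ∀ T ∈ (Finset.univ : Finset ι).powersetCard (M-1),
      ∑ x ∈ Finset.univ \ T, wGC α lam T = ((N : ℝ) - M + 1) * wGC α lam T := by
    intro T hT
    rw [Finset.mem_powersetCard_univ] at hT
    rw [Finset.sum_const, Finset.card_sdiff_of_subset (Finset.subset_univ T), Finset.card_univ, hT,
      nsmul_eq_mul]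
    congr 1
    have h1 : M - 1 ≤ N := by omega
    rw [Nat.cast_sub h1, Nat.cast_sub hM]
    push_cast
    ring
  rw [Finset.sum_congr rfl hcount, ← Finset.mul_sum]
  unfold PM
  ring

theorem stmt_11 (ι : Type) [Fintype ι] [DecidableEq ι] (α : ι → ℝ) (lam : ℝ)
    (M : ℕ) (hM : 1 ≤ M) (hMcard : M ≤ Fintype.card ι) :
    PM α lam (M - 1) / PM α lam M
      = ((Fintype.card ι : ℝ) / ((Fintype.card ι : ℝ) - M + 1)) * Real.exp (-lam) *
        ((∑ S ∈ Finset.univ.powersetCard M, wGC α lam S * zetaBar α S) /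
          ∑ S ∈ Finset.univ.powersetCard M, wGC α lam S) := by
  set N := Fintype.card ι with hN
  have hMN : (M : ℝ) ≤ (N : ℝ) := by exact_mod_cast hMcard
  have hM1 : (1 : ℝ) ≤ (M : ℝ) := by exact_mod_cast hM
  have hNne : (N : ℝ) ≠ 0 := by linarith
  have hKne : (N : ℝ) - M + 1 ≠ 0 := by linarith
  have hkey := key α lam M hM hMcard
  rw [hkey]
  show PM α lam (M - 1) / PM α lam M
    = ((N : ℝ) / ((N : ℝ) - M + 1)) * Real.exp (-lam) *
      (((N : ℝ)⁻¹ * Real.exp lam * ((N : ℝ) - M + 1) * PM α lam (M - 1)) / PM α lam M)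
  rw [← mul_div_assoc]
  congr 1
  rw [Real.exp_neg]
  field_simp
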